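/- Let Φ = ∃A∀B φ₀ be a closed QBF and suppose X = 0 is a cause of ψ in the reduction model (M_Φ, u), witnessed by a partition (Z,W) of the endogenous variables and a setting w' of W satisfying AC2, where W is minimal (no partition with a proper subset of W in place of W satisfies AC2 with some setting). Then: W ∩ B = ∅ (hence W ⊆ A ∪ {C}), C ∈ W, every variable of W is set to 1 in w', and the truth assignment to A that makes exactly the variables of W ∩ A true is a witness for Φ. -/

import Mathlib

open Classical

/-- A causal model over exogenous variables `U` and endogenous variables `V`,
with integer-valued variables.  `Rexo Y` / `R X` are the (intended) ranges of
the variables, and `F X` is the structural equation for the endogenous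
variable `X`, giving its value as a function of the values of all other
variables. -/
structure CausalModel (U V : Type) where
  Rexo : U → Set ℤ
  R : V → Set ℤ
  F : V → (U → ℤ) → (V → ℤ) → ℤ

namespace CausalModel

variable {U V : Type}

/-- A causal model is recursive if the variables can be ordered so that each
structural equation depends only on the values of strictly earlier endogenous
variables (equivalently, the dependency graph is acyclic). -/
def Recursive (M : CausalModel U V) : Prop :=
  ∃ ord : V → ℕ, ∀ (X : V) (u : U → ℤ) (g g' : V → ℤ),
    (∀ Y, ord Y < ord X → g Y = g' Y) → M.F X u g = M.F X u g'

/-- `s` simultaneously satisfies all the structural equations in context `u`. -/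
def IsSolution (M : CausalModel U V) (u : U → ℤ) (s : V → ℤ) : Prop :=
  ∀ X, s X = M.F X u s

/-- The (unique, for recursive models) solution of the equations in context `u`. -/
noncomputable def solution (M : CausalModel U V) (u : U → ℤ) : V → ℤ :=
  Classical.epsilon fun s => M.IsSolution u s

/-- The model `M_{A ← y}` obtained by replacing the equations of the variables
in `A` by the constant values given by `y`. -/
noncomputable def intervene (M : CausalModel U V) (A : Set V) (y : V → ℤ) :
    CausalModel U V where
  Rexo := M.Rexo
  R := M.R
  F := fun X u g => if X ∈ A then y X else M.F X u g

end CausalModel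

/-- Boolean combinations of primitive events `X = x`. -/
inductive CausalFormula (V : Type) where
  | tru : CausalFormula V
  | eq : V → ℤ → CausalFormula V
  | not : CausalFormula V → CausalFormula V
  | and : CausalFormula V → CausalFormula V → CausalFormula V
  | or : CausalFormula V → CausalFormula V → CausalFormula V
  | iff : CausalFormula V → CausalFormula V → CausalFormula V

/-- Truth of a causal formula under an assignment to the endogenous variables. -/
def CausalFormula.holds {V : Type} (s : V → ℤ) : CausalFormula V → Prop
  | tru => True
  | eq X x => s X = x
  | not φ => ¬ φ.holds s
  | and φ χ => φ.holds s ∧ χ.holds s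
  | or φ χ => φ.holds s ∨ χ.holds s
  | iff φ χ => φ.holds s ↔ χ.holds s

/-- `(M,u) ⊨ [A ← y] φ` : `φ` holds in the unique solution of `M_{A ← y}` in
context `u`. -/
def sat {U V : Type} (M : CausalModel U V) (u : U → ℤ) (A : Set V) (y : V → ℤ)
    (φ : CausalFormula V) : Prop :=
  φ.holds ((M.intervene A y).solution u)

/-- Condition AC2 of the Halpern–Pearl definition of causality, for the single
conjunct `X = x`, witnessed by the partition `(Wᶜ, W)` (so `Z = Wᶜ ∋ X`) and
the setting `(x', w')` of `(X, W)`. -/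
def AC2 {U V : Type} (M : CausalModel U V) (u : U → ℤ) (X : V) (x : ℤ)
    (φ : CausalFormula V) (W : Set V) (x' : ℤ) (w' : V → ℤ) : Prop :=
  X ∉ W ∧ x' ∈ M.R X ∧ (∀ Y ∈ W, w' Y ∈ M.R Y) ∧
  -- AC2(a): (M,u) ⊨ [X ← x', W ← w'] ¬φ
  ¬ sat M u (insert X W) (fun Y => if Y = X then x' else w' Y) φ ∧
  -- AC2(b): (M,u) ⊨ [X ← x, W ← w', Z' ← z*] φ for all subsets Z' of Z = Wᶜ
  ∀ Z' : Set V, Z' ⊆ Wᶜ →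
    sat M u (insert X (W ∪ Z'))
      (fun Y => if Y = X then x else if Y ∈ W then w' Y else M.solution u Y) φ

/-- `X = x` is a cause of `φ` in `(M,u)`: AC1 together with AC2 (AC3 is
automatic for single conjuncts). -/
def IsCause {U V : Type} (M : CausalModel U V) (u : U → ℤ) (X : V) (x : ℤ)
    (φ : CausalFormula V) : Prop :=
  (M.solution u X = x ∧ φ.holds (M.solution u)) ∧
  ∃ W x' w', AC2 M u X x φ W x' w'

/-- The degree of responsibility of `X = x` for `φ` in `(M,u)` : `0` if
`X = x` is not a cause of `φ`, and otherwise `1/(k+1)` where `k` is the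
minimal, over all AC2 witnesses, number of variables of `W` whose value in
`w'` differs from their value in the unique solution of `(M,u)`. -/
noncomputable def dr {U V : Type} (M : CausalModel U V) (u : U → ℤ) (X : V)
    (x : ℤ) (φ : CausalFormula V) : ℚ :=
  if IsCause M u X x φ then
    1 / ((sInf {k : ℕ | ∃ W x' w', AC2 M u X x φ W x' w' ∧
        {Y | Y ∈ W ∧ w' Y ≠ M.solution u Y}.ncard = k} : ℕ) + 1 : ℚ)
  else 0
open Classical

/-- Propositional formulas over variables of type `α`. -/
inductive PropForm (α : Type) where
  | tru : PropForm α
  | var : α → PropForm α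
  | not : PropForm α → PropForm α
  | and : PropForm α → PropForm α → PropForm α
  | or : PropForm α → PropForm α → PropForm α
  | iff : PropForm α → PropForm α → PropForm α

/-- Evaluation of a propositional formula under a truth assignment. -/
def PropForm.eval {α : Type} (g : α → Bool) : PropForm α → Bool
  | tru => true
  | var v => g v
  | not φ => !(φ.eval g)
  | and φ χ => φ.eval g && χ.eval g
  | or φ χ => φ.eval g || χ.eval g
  | iff φ χ => φ.eval g == χ.eval g

/-- The set of propositional variables occurring in a formula. -/
def PropForm.vars {α : Type} [DecidableEq α] : PropForm α → Finset α
  | tru => ∅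
  | var v => {v}
  | not φ => φ.vars
  | and φ χ => φ.vars ∪ χ.vars
  | or φ χ => φ.vars ∪ χ.vars
  | iff φ χ => φ.vars ∪ χ.vars

/-- Replace every propositional variable by its negation. -/
def PropForm.negVars {α : Type} : PropForm α → PropForm α
  | tru => tru
  | var v => .not (.var v)
  | not φ => .not φ.negVars
  | and φ χ => .and φ.negVars χ.negVars
  | or φ χ => .or φ.negVars χ.negVars
  | iff φ χ => .iff φ.negVars χ.negVars

/-- Conjunction of a list of propositional formulas. -/
def PropForm.bigAnd {α : Type} (l : List (PropForm α)) : PropForm α :=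
  l.foldr .and .tru

/-- `f` is a witness for the closed QBF `∃X ∀Y ψ` : `ψ` evaluates to true
under `f` (on `X`) combined with every truth assignment to the remaining
variables. -/
def IsWitness {α : Type} [DecidableEq α] (X : Finset α) (ψ : PropForm α)
    (f : α → Bool) : Prop :=
  ∀ g : α → Bool, (∀ v ∈ X, g v = f v) → ψ.eval g = true

/-- `MAXQSAT₂(∃X∀Y ψ)` : the maximal number of variables of `X` assigned true
by some witness, or `-1` if there is no witness. -/
noncomputable def MAXQSAT2 {α : Type} [DecidableEq α] (X : Finset α)
    (ψ : PropForm α) : ℤ :=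
  if ∃ f, IsWitness X ψ f then
    sSup {k : ℤ | ∃ f, IsWitness X ψ f ∧
      ((X.filter fun v => f v = true).card : ℤ) = k}
  else -1

/-- `MINQSAT₂(∃X∀Y ψ)` : the minimal number of variables of `X` assigned true
by some witness, or `|X| + 1` if there is no witness. -/
noncomputable def MINQSAT2 {α : Type} [DecidableEq α] (X : Finset α)
    (ψ : PropForm α) : ℤ :=
  if ∃ f, IsWitness X ψ f then
    sInf {k : ℤ | ∃ f, IsWitness X ψ f ∧
      ((X.filter fun v => f v = true).card : ℤ) = k}
  else X.card + 1

/-- `SUBSET_MAXQSAT₂(∃X∀Y ψ, Z)` : the maximal number of variables of `Z`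
assigned true by some witness, or `-1` if there is no witness. -/
noncomputable def SUBSET_MAXQSAT2 {α : Type} [DecidableEq α] (X Z : Finset α)
    (ψ : PropForm α) : ℤ :=
  if ∃ f, IsWitness X ψ f then
    sSup {k : ℤ | ∃ f, IsWitness X ψ f ∧
      ((Z.filter fun v => f v = true).card : ℤ) = k}
  else -1

/-- Conjunction of a list of causal formulas. -/
def CausalFormula.bigAnd {V : Type} (l : List (CausalFormula V)) :
    CausalFormula V :=
  l.foldr .and .tru

/-- Disjunction of a list of causal formulas. -/
def CausalFormula.bigOr {V : Type} (l : List (CausalFormula V)) :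
    CausalFormula V :=
  l.foldr .or (.not .tru)

/-- Translate a propositional formula into a causal formula by replacing each
propositional variable `S` by the primitive event `S = 1`. -/
def PropForm.toCausal {Var : Type} : PropForm Var → CausalFormula (Var ⊕ Bool)
  | .tru => .tru
  | .var v => .eq (Sum.inl v) 1
  | .not φ => .not φ.toCausal
  | .and φ χ => .and φ.toCausal χ.toCausal
  | .or φ χ => .or φ.toCausal χ.toCausal
  | .iff φ χ => .iff φ.toCausal χ.toCausal

/-- In the reduction model, the endogenous variables are the propositional
variables `A ∪ B` (as `Sum.inl`) together with `C := Sum.inr false` and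
`X := Sum.inr true`.  The exogenous part is a single variable `E`.  Each
variable in `A ∪ {C, X}` has range `{0,1}`, each variable in `B` has range
`{0,1,2}`; the equation of each `S ∈ B` is `F_S = C + X`, and the equation of
every other endogenous variable is `F = 0`. -/
def redModel {Var : Type} [DecidableEq Var] (B : Finset Var) :
    CausalModel Unit (Var ⊕ Bool) where
  Rexo := fun _ => {0}
  R := fun v =>
    match v with
    | Sum.inl s => if s ∈ B then ({0, 1, 2} : Set ℤ) else ({0, 1} : Set ℤ)
    | Sum.inr _ => {0, 1}
  F := fun v _ g =>
    match v with
    | Sum.inl s =>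
        if s ∈ B then g (Sum.inr false) + g (Sum.inr true) else 0
    | Sum.inr _ => 0

/-- The formula
`ψ = (φ₀' ∧ ⋀_{S∈B} S ≠ 2) ∨ (C = 0) ∨ ((X = 1) ∧ (C = 1) ∧ ⋁_{S∈B} S ≠ 2)`,
where `φ₀'` is `φ₀` with every propositional variable `S` replaced by the
primitive event `S = 1`. -/
noncomputable def redPsi {Var : Type} [DecidableEq Var] (B : Finset Var)
    (φ₀ : PropForm Var) : CausalFormula (Var ⊕ Bool) :=
  .or
    (.and φ₀.toCausal
      (CausalFormula.bigAnd (B.toList.map fun s => .not (.eq (Sum.inl s) 2))))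
    (.or (.eq (Sum.inr false) 0)
      (.and (.eq (Sum.inr true) 1)
        (.and (.eq (Sum.inr false) 1)
          (CausalFormula.bigOr
            (B.toList.map fun s => .not (.eq (Sum.inl s) 2))))))

/-- The context setting the single exogenous variable `E` to `0`. -/
def redCtx : Unit → ℤ := fun _ => 0

section Helpers

variable {Var : Type} [DecidableEq Var]

/-- Explicit solution of the intervened reduction model. -/
noncomputable def redSol (B : Finset Var) (A' : Set (Var ⊕ Bool))
    (y : (Var ⊕ Bool) → ℤ) : (Var ⊕ Bool) → ℤ :=
  fun v =>
    if v ∈ A' then y v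
    else match v with
      | Sum.inl s => if s ∈ B then
          (if Sum.inr false ∈ A' then y (Sum.inr false) else 0) +
          (if Sum.inr true ∈ A' then y (Sum.inr true) else 0)
        else 0
      | Sum.inr _ => 0

lemma redSol_isSolution (B : Finset Var) (A' : Set (Var ⊕ Bool))
    (y : (Var ⊕ Bool) → ℤ) :
    ((redModel B).intervene A' y).IsSolution redCtx (redSol B A' y) := by
  intro v
  rcases v with s | b
  · by_cases h : Sum.inl s ∈ A' <;>
      by_cases hs : s ∈ B <;>
      simp [redSol, CausalModel.intervene, redModel, h, hs]
  · by_cases h : Sum.inr b ∈ A' <;>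
      simp [redSol, CausalModel.intervene, redModel, h]

lemma redSol_unique (B : Finset Var) (A' : Set (Var ⊕ Bool))
    (y : (Var ⊕ Bool) → ℤ) (g : (Var ⊕ Bool) → ℤ)
    (hg : ((redModel B).intervene A' y).IsSolution redCtx g) :
    g = redSol B A' y := by
  have hinr : ∀ b, g (Sum.inr b) = if Sum.inr b ∈ A' then y (Sum.inr b) else 0 := by
    intro b
    have := hg (Sum.inr b)
    simpa [CausalModel.intervene, redModel] using this
  funext v
  rcases v with s | b
  · have := hg (Sum.inl s)
    by_cases h : Sum.inl s ∈ A' <;>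
      by_cases hs : s ∈ B <;>
      simp_all [redSol, CausalModel.intervene, redModel, h, hs, hinr false, hinr true]
  · simpa [redSol] using hinr b

lemma solution_intervene_eq (B : Finset Var) (A' : Set (Var ⊕ Bool))
    (y : (Var ⊕ Bool) → ℤ) :
    ((redModel B).intervene A' y).solution redCtx = redSol B A' y := by
  have hex : ∃ s, ((redModel B).intervene A' y).IsSolution redCtx s :=
    ⟨redSol B A' y, redSol_isSolution B A' y⟩
  exact redSol_unique B A' y _ (Classical.epsilon_spec hex)

lemma solution_red_eq (B : Finset Var) :
    (redModel B).solution redCtx = fun _ => 0 := by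
  have hz : (redModel B).IsSolution redCtx (fun _ => 0) := by
    intro v; rcases v with s | b <;> simp [redModel]
  have hex : ∃ s, (redModel B).IsSolution redCtx s := ⟨_, hz⟩
  have hsol : (redModel B).IsSolution redCtx ((redModel B).solution redCtx) :=
    Classical.epsilon_spec hex
  have hinr : ∀ b, (redModel B).solution redCtx (Sum.inr b) = 0 := by
    intro b; simpa [redModel] using hsol (Sum.inr b)
  funext v
  rcases v with s | b
  · have h := hsol (Sum.inl s)
    have h2 : (redModel B).F (Sum.inl s) redCtx ((redModel B).solution redCtx) =
        (if s ∈ B then (redModel B).solution redCtx (Sum.inr false) +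
          (redModel B).solution redCtx (Sum.inr true) else 0) := rfl
    rw [h, h2, hinr false, hinr true]
    simp
  · exact hinr b

lemma bigAnd_holds {V : Type} (s : V → ℤ) (l : List (CausalFormula V)) :
    (CausalFormula.bigAnd l).holds s ↔ ∀ φ ∈ l, φ.holds s := by
  induction l with
  | nil => simp [CausalFormula.bigAnd, CausalFormula.holds]
  | cons a l ih =>
      rw [show CausalFormula.bigAnd (a :: l) = .and a (CausalFormula.bigAnd l) from rfl]
      simp [CausalFormula.holds, ih]

lemma bigOr_holds {V : Type} (s : V → ℤ) (l : List (CausalFormula V)) :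
    (CausalFormula.bigOr l).holds s ↔ ∃ φ ∈ l, φ.holds s := by
  induction l with
  | nil => simp [CausalFormula.bigOr, CausalFormula.holds]
  | cons a l ih =>
      rw [show CausalFormula.bigOr (a :: l) = .or a (CausalFormula.bigOr l) from rfl]
      simp [CausalFormula.holds, ih]

lemma toCausal_holds (φ : PropForm Var) (s : (Var ⊕ Bool) → ℤ) :
    φ.toCausal.holds s ↔ φ.eval (fun v => decide (s (Sum.inl v) = 1)) = true := by
  induction φ with
  | tru => simp [PropForm.toCausal, CausalFormula.holds, PropForm.eval]
  | var v => simp [PropForm.toCausal, CausalFormula.holds, PropForm.eval]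
  | not φ ih => simp [PropForm.toCausal, CausalFormula.holds, PropForm.eval, ih]
  | and φ χ ih1 ih2 => simp [PropForm.toCausal, CausalFormula.holds, PropForm.eval, ih1, ih2]
  | or φ χ ih1 ih2 => simp [PropForm.toCausal, CausalFormula.holds, PropForm.eval, ih1, ih2]
  | iff φ χ ih1 ih2 =>
      show (φ.toCausal.holds s ↔ χ.toCausal.holds s) ↔
        (φ.eval (fun v => decide (s (Sum.inl v) = 1)) ==
          χ.eval (fun v => decide (s (Sum.inl v) = 1))) = true
      rw [ih1, ih2, beq_iff_eq]
      exact Bool.eq_iff_iff.symm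

lemma redPsi_holds (B : Finset Var) (φ₀ : PropForm Var) (s : (Var ⊕ Bool) → ℤ) :
    (redPsi B φ₀).holds s ↔
      ((φ₀.eval (fun v => decide (s (Sum.inl v) = 1)) = true ∧
          ∀ b ∈ B, s (Sum.inl b) ≠ 2) ∨
        s (Sum.inr false) = 0 ∨
        (s (Sum.inr true) = 1 ∧ s (Sum.inr false) = 1 ∧ ∃ b ∈ B, s (Sum.inl b) ≠ 2)) := by
  show (CausalFormula.or _ (.or _ (.and _ (.and _ _)))).holds s ↔ _
  simp only [CausalFormula.holds, bigAnd_holds, bigOr_holds, toCausal_holds,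
    List.mem_map, Finset.mem_toList, CausalFormula.holds]
  constructor
  · rintro (⟨h1, h2⟩ | h | ⟨h1, h2, h3⟩)
    · exact Or.inl ⟨h1, fun b hb => h2 _ ⟨b, hb, rfl⟩⟩
    · exact Or.inr (Or.inl h)
    · obtain ⟨φ, ⟨b, hb, rfl⟩, hφ⟩ := h3
      exact Or.inr (Or.inr ⟨h1, h2, b, hb, hφ⟩)
  · rintro (⟨h1, h2⟩ | h | ⟨h1, h2, b, hb, h3⟩)
    · exact Or.inl ⟨h1, by rintro φ ⟨b, hb, rfl⟩; exact h2 b hb⟩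
    · exact Or.inr (Or.inl h)
    · exact Or.inr (Or.inr ⟨h1, h2, _, ⟨b, hb, rfl⟩, h3⟩)

lemma redSol_apply_inr (B : Finset Var) (A' : Set (Var ⊕ Bool))
    (y : (Var ⊕ Bool) → ℤ) (b : Bool) :
    redSol B A' y (Sum.inr b) = if Sum.inr b ∈ A' then y (Sum.inr b) else 0 := rfl

lemma redSol_apply_inl (B : Finset Var) (A' : Set (Var ⊕ Bool))
    (y : (Var ⊕ Bool) → ℤ) (s : Var) :
    redSol B A' y (Sum.inl s) =
      if Sum.inl s ∈ A' then y (Sum.inl s)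
      else if s ∈ B then
        (if Sum.inr false ∈ A' then y (Sum.inr false) else 0) +
        (if Sum.inr true ∈ A' then y (Sum.inr true) else 0)
      else 0 := rfl

lemma redSol_eq (B : Finset Var) {A₁ A₂ : Set (Var ⊕ Bool)}
    {y₁ y₂ : (Var ⊕ Bool) → ℤ}
    (hpt : ∀ v, (if v ∈ A₁ then y₁ v else (0:ℤ)) = if v ∈ A₂ then y₂ v else 0)
    (hB : ∀ s ∈ B, (Sum.inl s ∈ A₁ ↔ Sum.inl s ∈ A₂)) :
    redSol B A₁ y₁ = redSol B A₂ y₂ := by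
  funext v
  rcases v with s | b
  · rw [redSol_apply_inl, redSol_apply_inl]
    by_cases hs : s ∈ B
    · by_cases h1 : Sum.inl s ∈ A₁
      · have h2 := (hB s hs).mp h1
        have hv := hpt (Sum.inl s); rw [if_pos h1, if_pos h2] at hv
        rw [if_pos h1, if_pos h2, hv]
      · have h2 : Sum.inl s ∉ A₂ := fun h => h1 ((hB s hs).mpr h)
        rw [if_neg h1, if_neg h2, if_pos hs, if_pos hs,
          hpt (Sum.inr false), hpt (Sum.inr true)]
    · simp only [if_neg hs]
      exact hpt (Sum.inl s)
  · rw [redSol_apply_inr, redSol_apply_inr]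
    exact hpt (Sum.inr b)

end Helpers

attribute [-instance] instDecidableEqSum in
/-- Suppose `X = 0` is a cause of `ψ` in the reduction model `(M_Φ, u)`,
witnessed by a partition `(Wᶜ, W)` and a setting `(x', w')` satisfying AC2,
where `W` is minimal.  Then `W ∩ B = ∅` (hence `W ⊆ A ∪ {C}`), `C ∈ W`,
every variable of `W` is set to `1` in `w'`, and the truth assignment to `A`
making exactly the variables of `W ∩ A` true is a witness for `Φ`. -/
theorem redModel_minimal_witness_structure {Var : Type} [Fintype Var]
    [DecidableEq Var]
    (A B : Finset Var) (hAB : Disjoint A B) (hcover : A ∪ B = Finset.univ)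
    (φ₀ : PropForm Var)
    (hcause : IsCause (redModel B) redCtx (Sum.inr true) 0 (redPsi B φ₀))
    (W : Set (Var ⊕ Bool)) (x' : ℤ) (w' : (Var ⊕ Bool) → ℤ)
    (hAC2 : AC2 (redModel B) redCtx (Sum.inr true) 0 (redPsi B φ₀) W x' w')
    (hmin : ∀ W₀ : Set (Var ⊕ Bool), W₀ ⊂ W →
      ¬ ∃ x'' w'', AC2 (redModel B) redCtx (Sum.inr true) 0 (redPsi B φ₀) W₀ x'' w'') :
    (∀ s ∈ B, Sum.inl s ∉ W) ∧
    (W ⊆ {Y | (∃ v ∈ A, Y = Sum.inl v) ∨ Y = Sum.inr false}) ∧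
    Sum.inr false ∈ W ∧
    (∀ Y ∈ W, w' Y = 1) ∧
    (∃ f : Var → Bool, (∀ v : Var, f v = true ↔ Sum.inl v ∈ W) ∧
      IsWitness A φ₀ f) := by
  classical
  obtain ⟨hXW, hx'R, hw'R, ha, hb⟩ := hAC2
  have hsol0 : (redModel B).solution redCtx = fun _ => 0 := solution_red_eq B
  simp only [sat, solution_intervene_eq, hsol0, redPsi_holds] at ha hb
  -- Step 1 : x' = 1
  have hx01 : x' = 0 ∨ x' = 1 := by simpa [redModel] using hx'R
  have hx1 : x' = 1 := by
    rcases hx01 with h0 | h1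
    · exfalso
      subst h0
      have hb0 := hb ∅ (Set.empty_subset _)
      rw [Set.union_empty] at hb0
      have heq : redSol B (insert (Sum.inr true) W)
            (fun Y => if Y = Sum.inr true then (0:ℤ) else w' Y)
          = redSol B (insert (Sum.inr true) W)
            (fun Y => if Y = Sum.inr true then (0:ℤ) else if Y ∈ W then w' Y else 0) := by
        apply redSol_eq
        · intro v
          by_cases hv : v ∈ insert (Sum.inr true) W
          · rw [if_pos hv, if_pos hv]
            rcases hv with rfl | hvW
            · simp
            · have hvX : v ≠ Sum.inr true := fun h => hXW (h ▸ hvW)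
              rw [if_neg hvX, if_neg hvX, if_pos hvW]
          · rw [if_neg hv, if_neg hv]
        · intro t ht; exact Iff.rfl
      rw [heq] at ha
      exact ha hb0
    · exact h1
  subst hx1
  -- Step 2 : facts from AC2(a)
  set s1 := redSol B (insert (Sum.inr true) W)
    (fun Y => if Y = Sum.inr true then (1:ℤ) else w' Y) with hs1def
  have hs1X : s1 (Sum.inr true) = 1 := by
    rw [hs1def, redSol_apply_inr, if_pos (Set.mem_insert _ _)]; simp
  have hCins : (Sum.inr false : Var ⊕ Bool) ∈ insert (Sum.inr true) W ↔
      Sum.inr false ∈ W := by simp [Set.mem_insert_iff]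
  have hs1C : s1 (Sum.inr false) = if Sum.inr false ∈ W then w' (Sum.inr false) else 0 := by
    rw [hs1def, redSol_apply_inr]
    by_cases h : (Sum.inr false : Var ⊕ Bool) ∈ W
    · rw [if_pos (hCins.mpr h), if_pos h]; simp
    · rw [if_neg (fun hh => h (hCins.mp hh)), if_neg h]
  have haC : s1 (Sum.inr false) ≠ 0 := fun h => ha (Or.inr (Or.inl h))
  have hCW : (Sum.inr false : Var ⊕ Bool) ∈ W := by
    by_contra h
    exact haC (by rw [hs1C, if_neg h])
  have hs1C1 : s1 (Sum.inr false) = w' (Sum.inr false) := by rw [hs1C, if_pos hCW]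
  have hw'C : w' (Sum.inr false) = 1 := by
    have hr : w' (Sum.inr false) = 0 ∨ w' (Sum.inr false) = 1 := by
      simpa [redModel] using hw'R _ hCW
    rcases hr with h | h
    · exact absurd (hs1C1.trans h) haC
    · exact h
  have hB2 : ∀ b ∈ B, s1 (Sum.inl b) = 2 := by
    intro b hbB
    by_contra h
    exact ha (Or.inr (Or.inr ⟨hs1X, hs1C1.trans hw'C, b, hbB, h⟩))
  have hBW2 : ∀ b ∈ B, Sum.inl b ∈ W → w' (Sum.inl b) = 2 := by
    intro b hbB hbW
    have h2 := hB2 b hbB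
    rw [hs1def, redSol_apply_inl, if_pos (Set.mem_insert_of_mem _ hbW)] at h2
    simpa using h2
  -- Step 3 : W ∩ B = ∅
  have hBnW : ∀ t ∈ B, Sum.inl t ∉ W := by
    intro b hbB hbW
    have hb0 := hb ∅ (Set.empty_subset _)
    rw [Set.union_empty] at hb0
    set s2 := redSol B (insert (Sum.inr true) W)
      (fun Y => if Y = Sum.inr true then (0:ℤ) else if Y ∈ W then w' Y else 0) with hs2def
    have hs2X : s2 (Sum.inr true) = 0 := by
      rw [hs2def, redSol_apply_inr, if_pos (Set.mem_insert _ _)]; simp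
    have hs2C : s2 (Sum.inr false) = 1 := by
      rw [hs2def, redSol_apply_inr, if_pos (Set.mem_insert_of_mem _ hCW)]
      simp [hCW, hw'C]
    have hs2b : s2 (Sum.inl b) = w' (Sum.inl b) := by
      rw [hs2def, redSol_apply_inl, if_pos (Set.mem_insert_of_mem _ hbW)]
      simp [hbW]
    rcases hb0 with ⟨_, hne2⟩ | h | ⟨h, _⟩
    · exact (hne2 b hbB) (by rw [hs2b, hBW2 b hbB hbW])
    · rw [hs2C] at h; exact one_ne_zero h
    · rw [hs2X] at h; norm_num at h
  -- Step 4 : W ⊆ A ∪ {C}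
  have hWsub : W ⊆ {Y | (∃ v ∈ A, Y = Sum.inl v) ∨ Y = Sum.inr false} := by
    intro Y hY
    rcases Y with v | b
    · have hv : v ∈ A ∪ B := by rw [hcover]; exact Finset.mem_univ v
      rcases Finset.mem_union.mp hv with h | h
      · exact Or.inl ⟨v, h, rfl⟩
      · exact absurd hY (hBnW v h)
    · cases b
      · exact Or.inr rfl
      · exact absurd hY hXW
  -- Step 5 : all variables of W are set to 1 in w'
  have hw1 : ∀ Y ∈ W, w' Y = 1 := by
    intro Y hY
    rcases hWsub hY with ⟨v, hvA, rfl⟩ | heqC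
    swap
    · rw [heqC] at hY ⊢; exact hw'C
    have hvB : v ∉ B := Finset.disjoint_left.mp hAB hvA
    have hr : w' (Sum.inl v) = 0 ∨ w' (Sum.inl v) = 1 := by
      simpa [redModel, hvB] using hw'R _ hY
    rcases hr with h0 | h1
    · exfalso
      apply hmin (W \ {Sum.inl v}) (Set.sdiff_singleton_ssubset.mpr hY)
      refine ⟨1, w', fun h => hXW h.1, hx'R, fun Z hZ => hw'R Z hZ.1, ?_, ?_⟩
      · -- AC2(a)
        simp only [sat, solution_intervene_eq, hsol0, redPsi_holds]
        have heq : redSol B (insert (Sum.inr true) (W \ {Sum.inl v}))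
              (fun Y => if Y = Sum.inr true then (1:ℤ) else w' Y) = s1 := by
          rw [hs1def]
          apply redSol_eq
          · intro u
            by_cases huv : u = Sum.inl v
            · subst huv
              have hnot : Sum.inl v ∉ insert (Sum.inr true) (W \ {Sum.inl v}) := by simp
              rw [if_neg hnot, if_pos (Set.mem_insert_of_mem _ hY)]
              simp [h0]
            · have hiff : u ∈ insert (Sum.inr true) (W \ {Sum.inl v}) ↔
                  u ∈ insert (Sum.inr true) W := by
                simp [Set.mem_insert_iff, Set.mem_diff, huv]
              by_cases hu : u ∈ insert (Sum.inr true) W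
              · rw [if_pos (hiff.mpr hu), if_pos hu]
              · rw [if_neg (fun hh => hu (hiff.mp hh)), if_neg hu]
          · intro t htB
            simp [Set.mem_insert_iff, Set.mem_diff, hBnW t htB]
        rw [heq]
        exact ha
      · -- AC2(b)
        intro Z' hZ'
        simp only [sat, solution_intervene_eq, hsol0, redPsi_holds]
        have hZ'' : Z' \ {Sum.inl v} ⊆ Wᶜ := by
          intro u hu
          intro huW
          exact hZ' hu.1 ⟨huW, hu.2⟩
        have hbZ := hb (Z' \ {Sum.inl v}) hZ''
        have heq : redSol B (insert (Sum.inr true) ((W \ {Sum.inl v}) ∪ Z'))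
              (fun Y => if Y = Sum.inr true then (0:ℤ)
                else if Y ∈ W \ {Sum.inl v} then w' Y else 0)
            = redSol B (insert (Sum.inr true) (W ∪ (Z' \ {Sum.inl v})))
              (fun Y => if Y = Sum.inr true then (0:ℤ)
                else if Y ∈ W then w' Y else 0) := by
          apply redSol_eq
          · intro u
            by_cases huv : u = Sum.inl v
            · subst huv
              rw [if_pos (Set.mem_insert_of_mem _ (Set.mem_union_left _ hY))]
              by_cases hz : Sum.inl v ∈ insert (Sum.inr true) ((W \ {Sum.inl v}) ∪ Z')
              · rw [if_pos hz]
                simp [hY, h0]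
              · rw [if_neg hz]
                simp [hY, h0]
            · have hiff : (u ∈ insert (Sum.inr true) ((W \ {Sum.inl v}) ∪ Z')) ↔
                  (u ∈ insert (Sum.inr true) (W ∪ (Z' \ {Sum.inl v}))) := by
                simp only [Set.mem_insert_iff, Set.mem_union, Set.mem_diff,
                  Set.mem_singleton_iff, huv]
                tauto
              have hvaleq : (if u = Sum.inr true then (0:ℤ)
                    else if u ∈ W \ {Sum.inl v} then w' u else 0)
                  = (if u = Sum.inr true then (0:ℤ)
                    else if u ∈ W then w' u else 0) := by
                by_cases hXu : u = Sum.inr true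
                · simp [hXu]
                · simp [hXu, Set.mem_diff, huv]
              by_cases hu : u ∈ insert (Sum.inr true) ((W \ {Sum.inl v}) ∪ Z')
              · rw [if_pos hu, if_pos (hiff.mp hu), hvaleq]
              · rw [if_neg hu, if_neg (fun hh => hu (hiff.mpr hh))]
          · intro t htB
            have htv : (Sum.inl t : Var ⊕ Bool) ≠ Sum.inl v := by
              intro hh; cases hh; exact hvB htB
            constructor
            · rintro (h | h)
              · exact Or.inl h
              · rcases h with h | h
                · exact absurd h.1 (hBnW t htB)
                · exact Or.inr (Or.inr ⟨h, htv⟩)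
            · rintro (h | h)
              · exact Or.inl h
              · rcases h with h | h
                · exact absurd h (hBnW t htB)
                · exact Or.inr (Or.inr h.1)
        rw [heq]
        exact hbZ
    · exact h1
  refine ⟨hBnW, hWsub, hCW, hw1, ?_⟩
  refine ⟨fun v => decide (Sum.inl v ∈ W), fun v => by simp, ?_⟩
  intro g hg
  set Z' : Set (Var ⊕ Bool) := {Y | ∃ t, t ∈ B ∧ g t = false ∧ Y = Sum.inl t} with hZ'def
  have hZ'W : Z' ⊆ Wᶜ := by
    rintro Y ⟨t, htB, _, rfl⟩
    exact hBnW t htB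
  have hbZ := hb Z' hZ'W
  set s3 := redSol B (insert (Sum.inr true) (W ∪ Z'))
    (fun Y => if Y = Sum.inr true then (0:ℤ) else if Y ∈ W then w' Y else 0) with hs3def
  have hs3X : s3 (Sum.inr true) = 0 := by
    rw [hs3def, redSol_apply_inr, if_pos (Set.mem_insert _ _)]; simp
  have hs3C : s3 (Sum.inr false) = 1 := by
    rw [hs3def, redSol_apply_inr,
      if_pos (Set.mem_insert_of_mem _ (Set.mem_union_left _ hCW))]
    simp [hCW, hw'C]
  have heval : PropForm.eval (fun v => decide (s3 (Sum.inl v) = 1)) φ₀ = true := by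
    rcases hbZ with ⟨h, _⟩ | h | ⟨h, _⟩
    · exact h
    · rw [hs3C] at h; norm_num at h
    · rw [hs3X] at h; norm_num at h
  have hgeq : (fun v => decide (s3 (Sum.inl v) = 1)) = g := by
    funext v
    have hv : v ∈ A ∨ v ∈ B := by
      have hm : v ∈ A ∪ B := by rw [hcover]; exact Finset.mem_univ v
      exact Finset.mem_union.mp hm
    rcases hv with hvA | hvB
    · have hvnB : v ∉ B := Finset.disjoint_left.mp hAB hvA
      have hnZ : Sum.inl v ∉ Z' := by
        rintro ⟨t, htB, _, hh⟩
        cases hh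
        exact hvnB htB
      rw [hs3def, redSol_apply_inl]
      by_cases hvW : Sum.inl v ∈ W
      · rw [if_pos (Set.mem_insert_of_mem _ (Set.mem_union_left _ hvW)), hg v hvA]
        simp [hvW, hw1 _ hvW]
      · have hnm : Sum.inl v ∉ insert (Sum.inr true) (W ∪ Z') := by
          simp only [Set.mem_insert_iff, Set.mem_union]
          push_neg
          exact ⟨by simp, hvW, hnZ⟩
        rw [if_neg hnm, if_neg hvnB, hg v hvA]
        simp [hvW]
    · have hvnW : Sum.inl v ∉ W := hBnW v hvB
      rw [hs3def, redSol_apply_inl]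
      by_cases hgv : g v = false
      · have hmem : Sum.inl v ∈ insert (Sum.inr true) (W ∪ Z') :=
          Set.mem_insert_of_mem _ (Set.mem_union_right _ ⟨v, hvB, hgv, rfl⟩)
        rw [if_pos hmem]
        simp [hvnW, hgv]
      · have hgv' : g v = true := by
          cases hgvv : g v
          · exact absurd hgvv hgv
          · rfl
        have hnZ : Sum.inl v ∉ Z' := by
          rintro ⟨t, htB, hgt, hh⟩
          cases hh
          rw [hgv'] at hgt
          exact Bool.noConfusion hgt
        have hnm : Sum.inl v ∉ insert (Sum.inr true) (W ∪ Z') := by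
          simp only [Set.mem_insert_iff, Set.mem_union]
          push_neg
          exact ⟨by simp, hvnW, hnZ⟩
        rw [if_neg hnm, if_pos hvB,
          if_pos (Set.mem_insert_of_mem _ (Set.mem_union_left _ hCW)),
          if_pos (Set.mem_insert _ _)]
        simp [hCW, hw'C, hgv']
  rw [hgeq] at heval
  exact heval
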